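/- Let P : I → (0,∞) be a C² function on an open interval I satisfying the traveling-wave profile equation P''(y) = (2/k²) f(P(y)) - (2sμ/k²) P'(y) + (P'(y))²/P(y) for all y ∈ I. Then for every y ∈ I the derivative of the energy y ↦ F(P(y)) - (1/2)(P'(y)/P(y))² equals (2sμ/k²)(P'(y)/P(y))². In particular, if s > 0 this energy is non-decreasing along the solution. -/

import Mathlib

open Real Filter

/-- The function `F` with `F'(P) = (2/k²) f(P)/P²`, where `f(P) = P^γ - C + A²/P`. -/
noncomputable def Ffun (γ k A C P : ℝ) : ℝ :=
  if γ = 1 then (2 / k ^ 2) * (Real.log P + C / P - A ^ 2 / (2 * P ^ 2))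
  else (2 / k ^ 2) * (P ^ (γ - 1) / (γ - 1) + C / P - A ^ 2 / (2 * P ^ 2))

lemma Ffun_hasDerivAt (γ k A C p : ℝ) (hγ : 1 ≤ γ) (hp : 0 < p) :
    HasDerivAt (Ffun γ k A C) ((2 / k ^ 2) * ((p ^ γ - C + A ^ 2 / p) / p ^ 2)) p := by
  have hp2 : (p : ℝ) ^ 2 ≠ 0 := by positivity
  have hCd : HasDerivAt (fun x : ℝ => C / x) ((0 * p - C * 1) / p ^ 2) p :=
    (hasDerivAt_const p C).div (hasDerivAt_id p) hp.ne'
  have h2x2 : HasDerivAt (fun x : ℝ => 2 * x ^ 2) (2 * ((2 : ℕ) * p ^ 1)) p :=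
    (hasDerivAt_pow 2 p).const_mul 2
  have hAd : HasDerivAt (fun x : ℝ => A ^ 2 / (2 * x ^ 2))
      ((0 * (2 * p ^ 2) - A ^ 2 * (2 * ((2 : ℕ) * p ^ 1))) / (2 * p ^ 2) ^ 2) p :=
    (hasDerivAt_const p (A ^ 2)).div h2x2 (by positivity)
  by_cases h : γ = 1
  · have hF : Ffun γ k A C = fun x : ℝ =>
        (2 / k ^ 2) * (Real.log x + C / x - A ^ 2 / (2 * x ^ 2)) := by
      funext x; simp [Ffun, h]
    rw [hF]
    have := (((Real.hasDerivAt_log hp.ne').add hCd).sub hAd).const_mul (2 / k ^ 2)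
    convert this using 1
    · rfl
    · rfl
    · rfl
    rw [h, Real.rpow_one]
    congr 1
    field_simp
    ring
  · have hF : Ffun γ k A C = fun x : ℝ =>
        (2 / k ^ 2) * (x ^ (γ - 1) / (γ - 1) + C / x - A ^ 2 / (2 * x ^ 2)) := by
      funext x; simp [Ffun, h]
    rw [hF]
    have hγ1 : γ - 1 ≠ 0 := sub_ne_zero.mpr h
    have hr : HasDerivAt (fun x : ℝ => x ^ (γ - 1) / (γ - 1))
        ((γ - 1) * p ^ (γ - 1 - 1) / (γ - 1)) p :=
      (Real.hasDerivAt_rpow_const (Or.inl hp.ne')).div_const (γ - 1)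
    have := ((hr.add hCd).sub hAd).const_mul (2 / k ^ 2)
    convert this using 1
    · rfl
    · rfl
    · rfl
    have hpow : p ^ (γ - 1 - 1) * p ^ (2 : ℝ) = p ^ γ := by
      rw [← Real.rpow_add hp]; ring_nf
    rw [Real.rpow_two] at hpow
    have he : p ^ (γ - 1 - 1) = p ^ γ / p ^ 2 := by
      rw [eq_div_iff hp2]; exact hpow
    rw [he]
    congr 1
    field_simp [hγ1]
    ring

/-- Along any positive `C²` solution of the traveling-wave profile equation
`P'' = (2/k²) f(P) - (2sμ/k²) P' + (P')²/P` on an open interval, the energy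
`F(P) - (1/2)(P'/P)²` has derivative `(2sμ/k²)(P'/P)²`; in particular it is
non-decreasing if `s > 0`. -/
theorem energy_derivative_traveling_wave_profile
    (γ k μ s A C : ℝ) (hγ : 1 ≤ γ) (hk : 0 < k) (hμ : 0 < μ)
    (f : ℝ → ℝ) (hf : ∀ P : ℝ, 0 < P → f P = P ^ γ - C + A ^ 2 / P)
    (I : Set ℝ) (hIopen : IsOpen I) (hIconn : I.OrdConnected)
    (P : ℝ → ℝ) (hP : ContDiffOn ℝ 2 P I) (hpos : ∀ y ∈ I, 0 < P y)
    (hode : ∀ y ∈ I,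
      deriv (deriv P) y =
        (2 / k ^ 2) * f (P y) - (2 * s * μ / k ^ 2) * deriv P y + (deriv P y) ^ 2 / P y) :
    (∀ y ∈ I,
      HasDerivAt (fun x => Ffun γ k A C (P x) - (1 / 2) * (deriv P x / P x) ^ 2)
        ((2 * s * μ / k ^ 2) * (deriv P y / P y) ^ 2) y) ∧
    (0 < s →
      MonotoneOn (fun x => Ffun γ k A C (P x) - (1 / 2) * (deriv P x / P x) ^ 2) I) := by
  have hderiv : ∀ y ∈ I,
      HasDerivAt (fun x => Ffun γ k A C (P x) - (1 / 2) * (deriv P x / P x) ^ 2)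
        ((2 * s * μ / k ^ 2) * (deriv P y / P y) ^ 2) y := by
    intro y hy
    have hyI : I ∈ nhds y := hIopen.mem_nhds hy
    have hPy : 0 < P y := hpos y hy
    have hPd : DifferentiableOn ℝ P I := hP.differentiableOn (by norm_num)
    have h1 : HasDerivAt P (deriv P y) y :=
      ((hPd y hy).differentiableAt hyI).hasDerivAt
    have hP' : ContDiffOn ℝ 1 (deriv P) I :=
      hP.deriv_of_isOpen hIopen (by norm_num)
    have h2 : HasDerivAt (deriv P) (deriv (deriv P) y) y :=
      (((hP'.differentiableOn one_ne_zero) y hy).differentiableAt hyI).hasDerivAt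
    have hF : HasDerivAt (fun x => Ffun γ k A C (P x))
        ((2 / k ^ 2) * (((P y) ^ γ - C + A ^ 2 / P y) / (P y) ^ 2) * deriv P y) y :=
      (Ffun_hasDerivAt γ k A C (P y) hγ hPy).comp y h1
    have hg : HasDerivAt (fun x => deriv P x / P x)
        ((deriv (deriv P) y * P y - deriv P y * deriv P y) / (P y) ^ 2) y :=
      h2.div h1 hPy.ne'
    have hq : HasDerivAt (fun x => (1 / 2 : ℝ) * (deriv P x / P x) ^ 2)
        ((1 / 2 : ℝ) * ((2 : ℕ) * (deriv P y / P y) ^ 1 *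
          ((deriv (deriv P) y * P y - deriv P y * deriv P y) / (P y) ^ 2))) y :=
      (hg.pow 2).const_mul (1 / 2)
    have := hF.sub hq
    convert this using 1
    · rfl
    · rfl
    · rfl
    have hodey := hode y hy
    rw [hf (P y) hPy] at hodey
    rw [hodey]
    have hk2 : (k : ℝ) ^ 2 ≠ 0 := by positivity
    field_simp
    ring
  refine ⟨hderiv, fun hs => ?_⟩
  have hconv : Convex ℝ I := convex_iff_ordConnected.mpr hIconn
  apply monotoneOn_of_deriv_nonneg hconv
  · exact fun y hy => (hderiv y hy).continuousAt.continuousWithinAt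
  · intro y hy
    rw [hIopen.interior_eq] at hy
    exact (hderiv y hy).differentiableAt.differentiableWithinAt
  · intro y hy
    rw [hIopen.interior_eq] at hy
    rw [(hderiv y hy).deriv]
    positivity
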